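/- For all integers m ≥ 1 and n ≥ 0, the Doob graph D(m,n) can be obtained from the Hamming graph H(2m+n, 4) by applying Godsil–McKay switching m times: there exist finite simple graphs Γ₀, Γ₁, …, Γ_m with Γ₀ = H(2m+n,4) and Γ_m ≅ D(m,n), such that for each k ∈ {1, …, m}, Γ_k = sw_{π_k} Γ_{k−1} for some Godsil–McKay partition π_k of V(Γ_{k−1}). -/

import Mathlib

open Classical Matrix Kronecker

/-- The number of neighbors of `x` inside the set `c`. -/
noncomputable def nbrCount {V : Type*} (G : SimpleGraph V) (x : V) (c : Finset V) : ℕ :=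
  (c.filter fun y => G.Adj x y).card

/-- `{C i} ∪ {D}` is a partition of the vertex set (all cells nonempty, pairwise
disjoint, covering). -/
def IsPartitionWithCell {V ι : Type*} (C : ι → Finset V) (D : Finset V) : Prop :=
  (∀ i, (C i).Nonempty) ∧ D.Nonempty ∧
    Pairwise (fun i j => Disjoint (C i) (C j)) ∧
    (∀ i, Disjoint (C i) D) ∧ ∀ x : V, x ∈ D ∨ ∃ i, x ∈ C i

/-- The family of cells `C` is equitable for `G` : any two vertices of a cell `C i`
have the same number of neighbors in each cell `C j`. -/
def IsEquitableOn {V ι : Type*} (G : SimpleGraph V) (C : ι → Finset V) : Prop :=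
  ∀ i j, ∀ x ∈ C i, ∀ y ∈ C i, nbrCount G x (C j) = nbrCount G y (C j)

/-- Every vertex of `D` has `0`, `|C i|/2` or `|C i|` neighbors in each cell `C i`. -/
def GMhalf {V ι : Type*} (G : SimpleGraph V) (C : ι → Finset V) (D : Finset V) : Prop :=
  ∀ x ∈ D, ∀ i, nbrCount G x (C i) = 0 ∨ 2 * nbrCount G x (C i) = (C i).card ∨
    nbrCount G x (C i) = (C i).card

/-- `π = {C₁, …, C_t, D}` is a Godsil–McKay partition of `G` with Godsil–McKay cell `D`. -/
def IsGMPartition {V ι : Type*} (G : SimpleGraph V) (C : ι → Finset V) (D : Finset V) : Prop :=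
  IsPartitionWithCell C D ∧ IsEquitableOn G C ∧ GMhalf G C D

/-- The graph obtained from `G` by Godsil–McKay switching with respect to the
partition `{C₁, …, C_t, D}` : adjacency and nonadjacency between `x ∈ D` and the
vertices of `C i` are interchanged whenever `x` has exactly `|C i|/2` neighbors in `C i`. -/
def GMswitch {V ι : Type*} (G : SimpleGraph V) (C : ι → Finset V) (D : Finset V) :
    SimpleGraph V where
  Adj x y := x ≠ y ∧ Xor' (G.Adj x y)
    (∃ i, (x ∈ D ∧ y ∈ C i ∧ 2 * nbrCount G x (C i) = (C i).card) ∨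
          (y ∈ D ∧ x ∈ C i ∧ 2 * nbrCount G y (C i) = (C i).card))
  symm := by
    constructor
    rintro x y ⟨hne, h⟩
    refine ⟨hne.symm, ?_⟩
    have h1 : (G.Adj y x) = (G.Adj x y) := propext (G.adj_comm y x)
    have h2 : (∃ i, (y ∈ D ∧ x ∈ C i ∧ 2 * nbrCount G y (C i) = (C i).card) ∨
          (x ∈ D ∧ y ∈ C i ∧ 2 * nbrCount G x (C i) = (C i).card)) =
        (∃ i, (x ∈ D ∧ y ∈ C i ∧ 2 * nbrCount G x (C i) = (C i).card) ∨
          (y ∈ D ∧ x ∈ C i ∧ 2 * nbrCount G y (C i) = (C i).card)) :=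
      propext (exists_congr fun i => or_comm)
    rw [h1, h2]
    exact h
  loopless := by constructor; rintro x ⟨hne, -⟩; exact hne rfl

/-- The adjacency matrix of a graph, with rational entries. -/
noncomputable def adjM {V : Type*} (G : SimpleGraph V) : Matrix V V ℚ :=
  Matrix.of fun x y => if G.Adj x y then 1 else 0

/-- The all-one matrix. -/
def allOnes (V : Type*) : Matrix V V ℚ := Matrix.of fun _ _ => 1

/-- The switching matrix `Q` of the partition `{C₁, …, C_t, D}` :
`Q x y = 2/|C i| - δ_{x y}` if `x, y ∈ C i`, `Q x y = δ_{x y}` if `x, y ∈ D`,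
and `Q x y = 0` otherwise. -/
noncomputable def switchMatrix {V ι : Type*} (C : ι → Finset V) (D : Finset V) :
    Matrix V V ℚ :=
  Matrix.of fun x y =>
    if h : ∃ i, x ∈ C i ∧ y ∈ C i then
      2 / ((C h.choose).card : ℚ) - (if x = y then 1 else 0)
    else if x ∈ D ∧ y ∈ D then (if x = y then 1 else 0) else 0

/-- The characteristic matrix of a family of cells: `S x i = 1` iff `x ∈ C i`. -/
noncomputable def charMat {V ι : Type*} (C : ι → Finset V) : Matrix V ι ℚ :=
  Matrix.of fun x i => if x ∈ C i then 1 else 0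

/-- `A₀ = I`, `A₁ = A(G)`, `A₂ = J - I - A(G)`. -/
noncomputable def stdMats {V : Type*} [DecidableEq V] (G : SimpleGraph V) :
    Fin 3 → Matrix V V ℚ :=
  ![1, adjM G, allOnes V - 1 - adjM G]

/-- The three basic relations: `i = 0` : equality, `i = 1` : adjacency,
`i = 2` : distinct nonadjacency. -/
def relOfIdx {V : Type*} (G : SimpleGraph V) (i : Fin 3) (x y : V) : Prop :=
  (i = 0 ∧ x = y) ∨ (i = 1 ∧ G.Adj x y) ∨ (i = 2 ∧ x ≠ y ∧ ¬ G.Adj x y)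

lemma relOfIdx_symm {V : Type*} {G : SimpleGraph V} {i : Fin 3} {x y : V}
    (h : relOfIdx G i x y) : relOfIdx G i y x := by
  rcases h with ⟨hi, h⟩ | ⟨hi, h⟩ | ⟨hi, h1, h2⟩
  · exact Or.inl ⟨hi, h.symm⟩
  · exact Or.inr (Or.inl ⟨hi, h.symm⟩)
  · exact Or.inr (Or.inr ⟨hi, h1.symm, fun hadj => h2 hadj.symm⟩)

/-- The unified graph product of type `[0 s₀₁ s₀₂; s₁₀ s₁₁ s₁₂; s₂₀ s₂₁ s₂₂]` :
the graph on `V × W` whose adjacency matrix is `Σ_{i,j} s i j • (A_i ⊗ B_j)`. -/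
def unifiedProd {V W : Type*} (G : SimpleGraph V) (H : SimpleGraph W)
    (s : Fin 3 → Fin 3 → ℚ) : SimpleGraph (V × W) where
  Adj p q := p ≠ q ∧ ∃ i j, s i j = 1 ∧ relOfIdx G i p.1 q.1 ∧ relOfIdx H j p.2 q.2
  symm := by
    constructor
    rintro p q ⟨hne, i, j, hs, hi, hj⟩
    exact ⟨hne.symm, i, j, hs, relOfIdx_symm hi, relOfIdx_symm hj⟩
  loopless := by constructor; rintro p ⟨hne, -⟩; exact hne rfl

/-- The Hamming graph `H(2,4) = K₄ □ K₄`. -/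
def H24 : SimpleGraph (Fin 4 × Fin 4) :=
  SimpleGraph.boxProd (⊤ : SimpleGraph (Fin 4)) (⊤ : SimpleGraph (Fin 4))

/-- The diagonal `C = {(x,x) : x ∈ [4]}` of the vertex set of `H(2,4)`. -/
def diagC : Finset (Fin 4 × Fin 4) := Finset.univ.filter fun p => p.1 = p.2

/-- The Shrikhande graph, obtained from `H(2,4)` by Godsil–McKay switching with
respect to the partition `{C, V \ C}`. -/
def Shrikhande : SimpleGraph (Fin 4 × Fin 4) :=
  GMswitch H24 (fun _ : Fin 1 => diagC) diagCᶜ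

/-- The Hamming graph `H(d,4)`, the Cartesian product of `d` copies of `K₄`. -/
def HamGraph (d : ℕ) : SimpleGraph (Fin d → Fin 4) where
  Adj f g := ∃ i, f i ≠ g i ∧ ∀ j, j ≠ i → f j = g j
  symm := by
    constructor
    rintro f g ⟨i, h1, h2⟩
    exact ⟨i, h1.symm, fun j hj => (h2 j hj).symm⟩
  loopless := by constructor; rintro f ⟨i, h1, -⟩; exact h1 rfl

/-- The Doob graph `D(m,n)`, the Cartesian product of `m` copies of the
Shrikhande graph and `n` copies of `K₄`. -/
def DoobGraph (m n : ℕ) :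
    SimpleGraph ((Fin m → Fin 4 × Fin 4) × (Fin n → Fin 4)) where
  Adj p q :=
    (∃ i, Shrikhande.Adj (p.1 i) (q.1 i) ∧ (∀ j, j ≠ i → p.1 j = q.1 j) ∧ p.2 = q.2) ∨
    (∃ i, p.2 i ≠ q.2 i ∧ (∀ j, j ≠ i → p.2 j = q.2 j) ∧ p.1 = q.1)
  symm := by
    constructor
    rintro p q (⟨i, h1, h2, h3⟩ | ⟨i, h1, h2, h3⟩)
    · exact Or.inl ⟨i, h1.symm, fun j hj => (h2 j hj).symm, h3.symm⟩
    · exact Or.inr ⟨i, h1.symm, fun j hj => (h2 j hj).symm, h3.symm⟩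
  loopless := by
    constructor
    rintro p (⟨i, h1, -⟩ | ⟨i, h1, -⟩)
    · exact Shrikhande.loopless.irrefl _ h1
    · exact h1 rfl

lemma H24_adj (p q : Fin 4 × Fin 4) :
    H24.Adj p q ↔ (p.1 ≠ q.1 ∧ p.2 = q.2) ∨ (p.2 ≠ q.2 ∧ p.1 = q.1) := by
  rw [show H24 = SimpleGraph.boxProd ⊤ ⊤ from rfl, SimpleGraph.boxProd_adj]
  simp only [SimpleGraph.top_adj]

lemma nbrH (p : Fin 4 × Fin 4) : nbrCount H24 p diagC =
    (diagC.filter fun y => (p.1 ≠ y.1 ∧ p.2 = y.2) ∨ (p.2 ≠ y.2 ∧ p.1 = y.1)).card := by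
  unfold nbrCount
  exact congrArg Finset.card (Finset.filter_congr fun y _ => H24_adj p y)

lemma nbrH' : ∀ p : Fin 4 × Fin 4,
    (diagC.filter fun y => (p.1 ≠ y.1 ∧ p.2 = y.2) ∨ (p.2 ≠ y.2 ∧ p.1 = y.1)).card
      = if p.1 = p.2 then 0 else 2 := by decide

lemma diagC_card : diagC.card = 4 := by decide

/-- Decidable explicit form of Shrikhande adjacency. -/
def shrAdj (p q : Fin 4 × Fin 4) : Prop := p ≠ q ∧
  Xor' ((p.1 ≠ q.1 ∧ p.2 = q.2) ∨ (p.2 ≠ q.2 ∧ p.1 = q.1))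
       ((p.1 ≠ p.2 ∧ q.1 = q.2) ∨ (q.1 ≠ q.2 ∧ p.1 = p.2))

instance : DecidableRel shrAdj := fun p q => by unfold shrAdj Xor'; infer_instance

lemma shr_adj_iff (p q : Fin 4 × Fin 4) : Shrikhande.Adj p q ↔ shrAdj p q := by
  show p ≠ q ∧ Xor' _ _ ↔ _
  unfold shrAdj
  refine and_congr Iff.rfl ?_
  have h1 : ∀ r : Fin 4 × Fin 4, (2 * nbrCount H24 r diagC = diagC.card) ↔ r.1 ≠ r.2 := by
    intro r
    rw [nbrH, nbrH', diagC_card]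
    by_cases h : r.1 = r.2 <;> simp [h]
  have h2 : (∃ _i : Fin 1, (p ∈ diagCᶜ ∧ q ∈ (fun _ : Fin 1 => diagC) _i ∧
      2 * nbrCount H24 p ((fun _ : Fin 1 => diagC) _i) = ((fun _ : Fin 1 => diagC) _i).card) ∨
      (q ∈ diagCᶜ ∧ p ∈ (fun _ : Fin 1 => diagC) _i ∧
      2 * nbrCount H24 q ((fun _ : Fin 1 => diagC) _i) = ((fun _ : Fin 1 => diagC) _i).card)) ↔
      ((p.1 ≠ p.2 ∧ q.1 = q.2) ∨ (q.1 ≠ q.2 ∧ p.1 = p.2)) := by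
    simp only [exists_const, h1]
    simp only [diagC, Finset.mem_compl, Finset.mem_filter, Finset.mem_univ, true_and]
    tauto
  rw [H24_adj, h2]
/-- The first coordinate of the `i`-th pair. -/
def pc1 (m n : ℕ) (i : Fin m) : Fin (2 * m + n) := ⟨2 * i, by omega⟩
/-- The second coordinate of the `i`-th pair. -/
def pc2 (m n : ℕ) (i : Fin m) : Fin (2 * m + n) := ⟨2 * i + 1, by omega⟩
/-- The `r`-th plain coordinate. -/
def pcr (m n : ℕ) (r : Fin n) : Fin (2 * m + n) := ⟨2 * m + r, by omega⟩

/-- The intermediate graph: the first `k` pairs of coordinates carry the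
Shrikhande graph, the remaining coordinates are plain `K₄` coordinates. -/
def Gam (m n k : ℕ) : SimpleGraph (Fin (2 * m + n) → Fin 4) where
  Adj f g :=
    (∃ i : Fin m, (i : ℕ) < k ∧
        Shrikhande.Adj (f (pc1 m n i), f (pc2 m n i)) (g (pc1 m n i), g (pc2 m n i)) ∧
        ∀ j, j ≠ pc1 m n i → j ≠ pc2 m n i → f j = g j)
    ∨ (∃ j : Fin (2 * m + n), 2 * k ≤ (j : ℕ) ∧ f j ≠ g j ∧ ∀ j', j' ≠ j → f j' = g j')
  symm := by
    constructor
    rintro f g (⟨i, hik, ha, he⟩ | ⟨j, hj, hne, he⟩)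
    · exact Or.inl ⟨i, hik, ha.symm, fun j h1 h2 => (he j h1 h2).symm⟩
    · exact Or.inr ⟨j, hj, hne.symm, fun j' h => (he j' h).symm⟩
  loopless := by
    constructor
    rintro f (⟨i, -, ha, -⟩ | ⟨j, -, hne, -⟩)
    · exact Shrikhande.loopless.irrefl _ ha
    · exact hne rfl
section Cells

variable (m n : ℕ) (k : Fin m)

/-- The element of the cell of `w` with diagonal value `a` at the `k`-th pair. -/
def eltF (w : Fin (2 * m + n) → Fin 4) (a : Fin 4) : Fin (2 * m + n) → Fin 4 :=
  fun j => if j = pc1 m n k ∨ j = pc2 m n k then a else w j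

/-- The cell of `w` : all vertices that are diagonal at the `k`-th pair and
agree with `w` outside the `k`-th pair. -/
def cellOf (w : Fin (2 * m + n) → Fin 4) : Finset (Fin (2 * m + n) → Fin 4) :=
  Finset.image (eltF m n k w) Finset.univ

/-- The Godsil–McKay cell: all vertices that are not diagonal at the `k`-th pair. -/
def Dset : Finset (Fin (2 * m + n) → Fin 4) :=
  Finset.univ.filter fun f => f (pc1 m n k) ≠ f (pc2 m n k)

variable {m n k}

lemma pc1_ne_pc2 : pc1 m n k ≠ pc2 m n k := by
  simp [pc1, pc2, Fin.ext_iff]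

lemma elt_pc1 (w a) : eltF m n k w a (pc1 m n k) = a := by simp [eltF]

lemma elt_pc2 (w a) : eltF m n k w a (pc2 m n k) = a := by simp [eltF]

lemma elt_off (w a) {j} (h1 : j ≠ pc1 m n k) (h2 : j ≠ pc2 m n k) :
    eltF m n k w a j = w j := by simp [eltF, h1, h2]

lemma elt_inj (w) : Function.Injective (eltF m n k w) := by
  intro a b h
  have := congrFun h (pc1 m n k)
  rwa [elt_pc1, elt_pc1] at this

lemma elt_eq_self {w f : Fin (2 * m + n) → Fin 4} (hd : f (pc1 m n k) = f (pc2 m n k))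
    (hoff : ∀ j, j ≠ pc1 m n k → j ≠ pc2 m n k → f j = w j) :
    eltF m n k w (f (pc1 m n k)) = f := by
  funext j
  by_cases h1 : j = pc1 m n k
  · subst h1; rw [elt_pc1]
  by_cases h2 : j = pc2 m n k
  · subst h2; rw [elt_pc2, hd]
  · rw [elt_off _ _ h1 h2, hoff j h1 h2]

lemma cell_card (w) : (cellOf m n k w).card = 4 := by
  rw [cellOf, Finset.card_image_of_injective _ (elt_inj w), Finset.card_univ,
    Fintype.card_fin]

lemma nbrCount_cell (G : SimpleGraph (Fin (2 * m + n) → Fin 4)) (x w) :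
    nbrCount G x (cellOf m n k w) =
      (Finset.univ.filter fun a => G.Adj x (eltF m n k w a)).card := by
  unfold nbrCount cellOf
  rw [Finset.filter_image, Finset.card_image_of_injective _ (elt_inj w)]

/-- coordinates of earlier pairs avoid the `k`-th pair -/
lemma pair_lt_ne {i : Fin m} (hik : (i : ℕ) < (k : ℕ)) :
    pc1 m n i ≠ pc1 m n k ∧ pc1 m n i ≠ pc2 m n k ∧
    pc2 m n i ≠ pc1 m n k ∧ pc2 m n i ≠ pc2 m n k := by
  simp only [pc1, pc2, Ne, Fin.ext_iff]
  omega

lemma adj_elt_of_match {x w : Fin (2 * m + n) → Fin 4} {a : Fin 4}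
    (hD : x (pc1 m n k) ≠ x (pc2 m n k))
    (hm : ∀ j, j ≠ pc1 m n k → j ≠ pc2 m n k → x j = w j) :
    (Gam m n k).Adj x (eltF m n k w a) ↔ a = x (pc1 m n k) ∨ a = x (pc2 m n k) := by
  constructor
  · rintro (⟨i, hik, ha, he⟩ | ⟨j, hj, hne, he⟩)
    · obtain ⟨h1, h2, h3, h4⟩ := pair_lt_ne (k := k) (i := i) hik
      have e1 := he (pc1 m n k) (Ne.symm h1) (Ne.symm h3)
      have e2 := he (pc2 m n k) (Ne.symm h2) (Ne.symm h4)
      rw [elt_pc1] at e1; rw [elt_pc2] at e2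
      exact absurd (e1.trans e2.symm) hD
    · by_cases h1 : j = pc1 m n k
      · subst h1
        have := he (pc2 m n k) (Ne.symm pc1_ne_pc2)
        rw [elt_pc2] at this
        exact Or.inr this.symm
      by_cases h2 : j = pc2 m n k
      · subst h2
        have := he (pc1 m n k) pc1_ne_pc2
        rw [elt_pc1] at this
        exact Or.inl this.symm
      · exact absurd ((hm j h1 h2).trans (elt_off w a h1 h2).symm) hne
  · have hoff : ∀ j', j' ≠ pc1 m n k → j' ≠ pc2 m n k → x j' = eltF m n k w a j' :=
      fun j' h1 h2 => (hm j' h1 h2).trans (elt_off w a h1 h2).symm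
    rintro (rfl | rfl)
    · refine Or.inr ⟨pc2 m n k, by simp [pc2], ?_, ?_⟩
      · rw [elt_pc2]; exact hD.symm
      · intro j' hj'
        by_cases h1 : j' = pc1 m n k
        · subst h1; rw [elt_pc1]
        · exact hoff j' h1 hj'
    · refine Or.inr ⟨pc1 m n k, by simp [pc1], ?_, ?_⟩
      · rw [elt_pc1]; exact hD
      · intro j' hj'
        by_cases h2 : j' = pc2 m n k
        · subst h2; rw [elt_pc2]
        · exact hoff j' hj' h2

lemma not_adj_elt_of_mismatch {x w : Fin (2 * m + n) → Fin 4} {a : Fin 4}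
    (hD : x (pc1 m n k) ≠ x (pc2 m n k)) {j0}
    (hj1 : j0 ≠ pc1 m n k) (hj2 : j0 ≠ pc2 m n k) (hj3 : x j0 ≠ w j0) :
    ¬ (Gam m n k).Adj x (eltF m n k w a) := by
  rintro (⟨i, hik, ha, he⟩ | ⟨j, hj, hne, he⟩)
  · obtain ⟨h1, h2, h3, h4⟩ := pair_lt_ne (k := k) (i := i) hik
    have e1 := he (pc1 m n k) (Ne.symm h1) (Ne.symm h3)
    have e2 := he (pc2 m n k) (Ne.symm h2) (Ne.symm h4)
    rw [elt_pc1] at e1; rw [elt_pc2] at e2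
    exact hD (e1.trans e2.symm)
  · by_cases hj0 : j0 = j
    · subst hj0
      have e1 := he (pc1 m n k) (Ne.symm hj1)
      have e2 := he (pc2 m n k) (Ne.symm hj2)
      rw [elt_pc1] at e1; rw [elt_pc2] at e2
      exact hD (e1.trans e2.symm)
    · have := he j0 hj0
      rw [elt_off w a hj1 hj2] at this
      exact hj3 this

lemma count_match {x w : Fin (2 * m + n) → Fin 4}
    (hD : x (pc1 m n k) ≠ x (pc2 m n k))
    (hm : ∀ j, j ≠ pc1 m n k → j ≠ pc2 m n k → x j = w j) :
    nbrCount (Gam m n k) x (cellOf m n k w) = 2 := by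
  rw [nbrCount_cell]
  have : (Finset.univ.filter fun a => (Gam m n k).Adj x (eltF m n k w a)) =
      {x (pc1 m n k), x (pc2 m n k)} := by
    ext a
    simp only [Finset.mem_filter, Finset.mem_univ, true_and, Finset.mem_insert,
      Finset.mem_singleton]
    exact adj_elt_of_match hD hm
  rw [this, Finset.card_pair hD]

lemma count_mismatch {x w : Fin (2 * m + n) → Fin 4}
    (hD : x (pc1 m n k) ≠ x (pc2 m n k)) {j0}
    (hj1 : j0 ≠ pc1 m n k) (hj2 : j0 ≠ pc2 m n k) (hj3 : x j0 ≠ w j0) :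
    nbrCount (Gam m n k) x (cellOf m n k w) = 0 := by
  rw [nbrCount_cell, Finset.card_eq_zero, Finset.filter_eq_empty_iff]
  intro a _
  exact not_adj_elt_of_mismatch hD hj1 hj2 hj3

lemma half_iff {x w : Fin (2 * m + n) → Fin 4}
    (hD : x (pc1 m n k) ≠ x (pc2 m n k)) :
    2 * nbrCount (Gam m n k) x (cellOf m n k w) = (cellOf m n k w).card ↔
      ∀ j, j ≠ pc1 m n k → j ≠ pc2 m n k → x j = w j := by
  rw [cell_card]
  by_cases hm : ∀ j, j ≠ pc1 m n k → j ≠ pc2 m n k → x j = w j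
  · rw [count_match hD hm]; simpa using hm
  · push_neg at hm
    obtain ⟨j0, h1, h2, h3⟩ := hm
    rw [count_mismatch hD h1 h2 h3]
    constructor
    · omega
    · intro h; exact absurd (h j0 h1 h2) h3

end Cells
section Perm

variable {m n : ℕ} {k : Fin m}

/-- Apply the permutation `σ` to the two coordinates of the `k`-th pair. -/
def Tperm (k : Fin m) (σ : Equiv.Perm (Fin 4)) (f : Fin (2 * m + n) → Fin 4) :
    Fin (2 * m + n) → Fin 4 :=
  fun j => if j = pc1 m n k ∨ j = pc2 m n k then σ (f j) else f j

lemma Tperm_eq_iff (σ : Equiv.Perm (Fin 4)) (f g : Fin (2 * m + n) → Fin 4) (j) :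
    Tperm k σ f j = Tperm k σ g j ↔ f j = g j := by
  unfold Tperm
  split_ifs with h
  · exact σ.injective.eq_iff
  · exact Iff.rfl

lemma Tperm_off (σ : Equiv.Perm (Fin 4)) (f : Fin (2 * m + n) → Fin 4) {j}
    (h1 : j ≠ pc1 m n k) (h2 : j ≠ pc2 m n k) : Tperm k σ f j = f j := by
  simp [Tperm, h1, h2]

lemma Tperm_adj (σ : Equiv.Perm (Fin 4)) (f g : Fin (2 * m + n) → Fin 4) :
    (Gam m n k).Adj (Tperm k σ f) (Tperm k σ g) ↔ (Gam m n k).Adj f g := by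
  have pairval : ∀ (h : Fin (2 * m + n) → Fin 4) (i : Fin m), (i : ℕ) < (k : ℕ) →
      Tperm k σ h (pc1 m n i) = h (pc1 m n i) ∧ Tperm k σ h (pc2 m n i) = h (pc2 m n i) := by
    intro h i hik
    obtain ⟨h1, h2, h3, h4⟩ := pair_lt_ne (k := k) (i := i) hik
    exact ⟨Tperm_off σ h h1 h2, Tperm_off σ h h3 h4⟩
  constructor
  · rintro (⟨i, hik, ha, he⟩ | ⟨j, hj, hne, he⟩)
    · refine Or.inl ⟨i, hik, ?_, fun j hj1 hj2 => (Tperm_eq_iff σ f g j).mp (he j hj1 hj2)⟩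
      rwa [(pairval f i hik).1, (pairval f i hik).2, (pairval g i hik).1,
        (pairval g i hik).2] at ha
    · exact Or.inr ⟨j, hj, fun h => hne ((Tperm_eq_iff σ f g j).mpr h),
        fun j' hj' => (Tperm_eq_iff σ f g j').mp (he j' hj')⟩
  · rintro (⟨i, hik, ha, he⟩ | ⟨j, hj, hne, he⟩)
    · refine Or.inl ⟨i, hik, ?_, fun j hj1 hj2 => (Tperm_eq_iff σ f g j).mpr (he j hj1 hj2)⟩
      rwa [(pairval f i hik).1, (pairval f i hik).2, (pairval g i hik).1,
        (pairval g i hik).2]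
    · exact Or.inr ⟨j, hj, fun h => hne ((Tperm_eq_iff σ f g j).mp h),
        fun j' hj' => (Tperm_eq_iff σ f g j').mpr (he j' hj')⟩

lemma Tperm_elt (σ : Equiv.Perm (Fin 4)) (w : Fin (2 * m + n) → Fin 4) (a : Fin 4) :
    Tperm k σ (eltF m n k w a) = eltF m n k w (σ a) := by
  funext j
  by_cases h1 : j = pc1 m n k
  · subst h1; simp [Tperm, eltF]
  by_cases h2 : j = pc2 m n k
  · subst h2; simp [Tperm, eltF]
  · rw [Tperm_off σ _ h1 h2, elt_off _ _ h1 h2, elt_off _ _ h1 h2]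

lemma equit_cells (w w' : Fin (2 * m + n) → Fin 4) :
    ∀ x ∈ cellOf m n k w, ∀ y ∈ cellOf m n k w,
      nbrCount (Gam m n k) x (cellOf m n k w') = nbrCount (Gam m n k) y (cellOf m n k w') := by
  intro x hx y hy
  rw [cellOf, Finset.mem_image] at hx hy
  obtain ⟨a, -, rfl⟩ := hx
  obtain ⟨b, -, rfl⟩ := hy
  set σ : Equiv.Perm (Fin 4) := Equiv.swap a b with hσ
  have hT : Tperm k σ (eltF m n k w a) = eltF m n k w b := by
    rw [Tperm_elt, hσ, Equiv.swap_apply_left]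
  rw [nbrCount_cell, nbrCount_cell]
  apply Finset.card_equiv σ
  intro c
  simp only [Finset.mem_filter, Finset.mem_univ, true_and]
  rw [← Tperm_adj σ, hT, Tperm_elt]

end Perm
section Partition

variable (m n : ℕ) (k : Fin m)

/-- Normalized representatives: vertices vanishing on the `k`-th pair. -/
def NT := {w : Fin (2 * m + n) → Fin 4 // w (pc1 m n k) = 0 ∧ w (pc2 m n k) = 0}

instance : Fintype (NT m n k) := by unfold NT; infer_instance

/-- Enumeration of the normalized representatives. -/
noncomputable def eN : Fin (Fintype.card (NT m n k)) ≃ NT m n k :=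
  (Fintype.equivFin (NT m n k)).symm

/-- The cells of the Godsil–McKay partition. -/
noncomputable def cells (j : Fin (Fintype.card (NT m n k))) :
    Finset (Fin (2 * m + n) → Fin 4) :=
  cellOf m n k ((eN m n k j) : NT m n k).val

/-- Normalization of a vertex: set the `k`-th pair to `0`. -/
def normW (f : Fin (2 * m + n) → Fin 4) : Fin (2 * m + n) → Fin 4 :=
  fun j => if j = pc1 m n k ∨ j = pc2 m n k then 0 else f j

variable {m n k}

lemma normW_mem (f) : normW m n k f (pc1 m n k) = 0 ∧ normW m n k f (pc2 m n k) = 0 := by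
  constructor <;> simp [normW]

lemma normW_off (f) {j} (h1 : j ≠ pc1 m n k) (h2 : j ≠ pc2 m n k) :
    normW m n k f j = f j := by simp [normW, h1, h2]

lemma mem_cellOf {w f : Fin (2 * m + n) → Fin 4} :
    f ∈ cellOf m n k w ↔ f (pc1 m n k) = f (pc2 m n k) ∧
      ∀ j, j ≠ pc1 m n k → j ≠ pc2 m n k → f j = w j := by
  constructor
  · rw [cellOf, Finset.mem_image]
    rintro ⟨a, -, rfl⟩
    exact ⟨(elt_pc1 w a).trans (elt_pc2 w a).symm, fun j h1 h2 => elt_off w a h1 h2⟩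
  · rintro ⟨hd, hoff⟩
    rw [cellOf, Finset.mem_image]
    exact ⟨f (pc1 m n k), Finset.mem_univ _, elt_eq_self hd hoff⟩

lemma mem_Dset {f : Fin (2 * m + n) → Fin 4} :
    f ∈ Dset m n k ↔ f (pc1 m n k) ≠ f (pc2 m n k) := by
  simp [Dset]

lemma isGM : IsGMPartition (Gam m n k) (cells m n k) (Dset m n k) := by
  refine ⟨⟨?_, ?_, ?_, ?_, ?_⟩, ?_, ?_⟩
  · -- cells nonempty
    intro j
    exact ⟨eltF m n k _ 0, Finset.mem_image.mpr ⟨0, Finset.mem_univ _, rfl⟩⟩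
  · -- D nonempty
    refine ⟨fun j => if j = pc1 m n k then 0 else 1, mem_Dset.mpr ?_⟩
    simp [pc1_ne_pc2.symm]
  · -- pairwise disjoint
    intro i j hij
    rw [Finset.disjoint_left]
    intro x hxi hxj
    apply hij
    apply (eN m n k).injective
    apply Subtype.ext
    obtain ⟨-, hi⟩ := mem_cellOf.mp hxi
    obtain ⟨-, hj⟩ := mem_cellOf.mp hxj
    funext j'
    by_cases h1 : j' = pc1 m n k
    · subst h1; rw [((eN m n k i) : NT m n k).2.1, ((eN m n k j) : NT m n k).2.1]
    by_cases h2 : j' = pc2 m n k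
    · subst h2; rw [((eN m n k i) : NT m n k).2.2, ((eN m n k j) : NT m n k).2.2]
    · rw [← hi j' h1 h2, hj j' h1 h2]
  · -- cells disjoint from D
    intro i
    rw [Finset.disjoint_left]
    intro x hxi hxD
    exact (mem_Dset.mp hxD) (mem_cellOf.mp hxi).1
  · -- covering
    intro x
    by_cases hd : x (pc1 m n k) = x (pc2 m n k)
    · right
      refine ⟨(eN m n k).symm ⟨normW m n k x, normW_mem x⟩, ?_⟩
      show x ∈ cellOf m n k _
      erw [Equiv.apply_symm_apply]
      exact mem_cellOf.mpr ⟨hd, fun j h1 h2 => (normW_off x h1 h2).symm⟩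
    · exact Or.inl (mem_Dset.mpr hd)
  · -- equitable
    intro i j x hx y hy
    exact equit_cells _ _ x hx y hy
  · -- GM half condition
    intro x hx i
    have hD := mem_Dset.mp hx
    by_cases hm : ∀ j, j ≠ pc1 m n k → j ≠ pc2 m n k → x j = ((eN m n k i) : NT m n k).val j
    · right; left
      exact (half_iff hD).mpr hm
    · left
      push_neg at hm
      obtain ⟨j0, h1, h2, h3⟩ := hm
      exact count_mismatch hD h1 h2 h3

end Partition
section Switch

variable {m n : ℕ} {k : Fin m}

lemma flip_iff (f g : Fin (2 * m + n) → Fin 4) :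
    (∃ j, (f ∈ Dset m n k ∧ g ∈ cells m n k j ∧
            2 * nbrCount (Gam m n k) f (cells m n k j) = (cells m n k j).card) ∨
          (g ∈ Dset m n k ∧ f ∈ cells m n k j ∧
            2 * nbrCount (Gam m n k) g (cells m n k j) = (cells m n k j).card)) ↔
      ((f (pc1 m n k) ≠ f (pc2 m n k) ∧ g (pc1 m n k) = g (pc2 m n k)) ∨
       (g (pc1 m n k) ≠ g (pc2 m n k) ∧ f (pc1 m n k) = f (pc2 m n k))) ∧
      ∀ j, j ≠ pc1 m n k → j ≠ pc2 m n k → f j = g j := by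
  constructor
  · rintro ⟨j, ⟨hfD, hgC, hhalf⟩ | ⟨hgD, hfC, hhalf⟩⟩
    · have hD := mem_Dset.mp hfD
      obtain ⟨hgd, hgoff⟩ := mem_cellOf.mp hgC
      have hfw := (half_iff hD).mp hhalf
      exact ⟨Or.inl ⟨hD, hgd⟩, fun j' h1 h2 => (hfw j' h1 h2).trans (hgoff j' h1 h2).symm⟩
    · have hD := mem_Dset.mp hgD
      obtain ⟨hfd, hfoff⟩ := mem_cellOf.mp hfC
      have hgw := (half_iff hD).mp hhalf
      exact ⟨Or.inr ⟨hD, hfd⟩, fun j' h1 h2 => (hfoff j' h1 h2).trans (hgw j' h1 h2).symm⟩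
  · rintro ⟨hor, hoff⟩
    rcases hor with ⟨hfD, hgd⟩ | ⟨hgD, hfd⟩
    · have hc : cells m n k ((eN m n k).symm ⟨normW m n k g, normW_mem g⟩) =
          cellOf m n k (normW m n k g) := by
        erw [cells, Equiv.apply_symm_apply]
      refine ⟨(eN m n k).symm ⟨normW m n k g, normW_mem g⟩, Or.inl ⟨mem_Dset.mpr hfD, ?_, ?_⟩⟩
      · rw [hc]
        exact mem_cellOf.mpr ⟨hgd, fun j h1 h2 => (normW_off g h1 h2).symm⟩
      · rw [hc]
        exact (half_iff hfD).mpr fun j h1 h2 => (hoff j h1 h2).trans (normW_off g h1 h2).symm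
    · have hc : cells m n k ((eN m n k).symm ⟨normW m n k f, normW_mem f⟩) =
          cellOf m n k (normW m n k f) := by
        erw [cells, Equiv.apply_symm_apply]
      refine ⟨(eN m n k).symm ⟨normW m n k f, normW_mem f⟩, Or.inr ⟨mem_Dset.mpr hgD, ?_, ?_⟩⟩
      · rw [hc]
        exact mem_cellOf.mpr ⟨hfd, fun j h1 h2 => (normW_off f h1 h2).symm⟩
      · rw [hc]
        exact (half_iff hgD).mpr fun j h1 h2 =>
          ((hoff j h1 h2).symm).trans (normW_off f h1 h2).symm

lemma pc_ne_of_ge {j : Fin (2 * m + n)} (h : 2 * ((k : ℕ) + 1) ≤ (j : ℕ)) :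
    j ≠ pc1 m n k ∧ j ≠ pc2 m n k := by
  simp only [pc1, pc2, Ne, Fin.ext_iff]
  omega

lemma gam_succ_eq : Gam m n ((k : ℕ) + 1) = GMswitch (Gam m n k) (cells m n k) (Dset m n k) := by
  ext f g
  show _ ↔ f ≠ g ∧ Xor' _ _
  rw [flip_iff]
  by_cases hsame : ∀ j, j ≠ pc1 m n k → j ≠ pc2 m n k → f j = g j
  · -- Case A : f and g agree outside the k-th pair
    have hne : f ≠ g ↔ ¬(f (pc1 m n k) = g (pc1 m n k) ∧ f (pc2 m n k) = g (pc2 m n k)) := by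
      constructor
      · intro h hpair
        apply h
        funext j
        by_cases h1 : j = pc1 m n k
        · subst h1; exact hpair.1
        by_cases h2 : j = pc2 m n k
        · subst h2; exact hpair.2
        · exact hsame j h1 h2
      · intro h hfg; subst hfg; exact h ⟨rfl, rfl⟩
    have hG1 : (Gam m n ((k : ℕ) + 1)).Adj f g ↔
        Shrikhande.Adj (f (pc1 m n k), f (pc2 m n k)) (g (pc1 m n k), g (pc2 m n k)) := by
      constructor
      · rintro (⟨i, hik, ha, he⟩ | ⟨j, hj, hnej, he⟩)
        · by_cases hik' : (i : ℕ) < (k : ℕ)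
          · obtain ⟨h1, h2, h3, h4⟩ := pair_lt_ne (k := k) (i := i) hik'
            rw [hsame _ h1 h2, hsame _ h3 h4] at ha
            exact absurd ha (Shrikhande.loopless.irrefl _)
          · have : i = k := Fin.ext (by omega)
            subst this
            exact ha
        · obtain ⟨h1, h2⟩ := pc_ne_of_ge hj
          exact absurd (hsame j h1 h2) hnej
      · intro ha
        exact Or.inl ⟨k, Nat.lt_succ_self _, ha, hsame⟩
    have hG0 : (Gam m n k).Adj f g ↔
        ((f (pc1 m n k) ≠ g (pc1 m n k) ∧ f (pc2 m n k) = g (pc2 m n k)) ∨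
         (f (pc2 m n k) ≠ g (pc2 m n k) ∧ f (pc1 m n k) = g (pc1 m n k))) := by
      constructor
      · rintro (⟨i, hik, ha, he⟩ | ⟨j, hj, hnej, he⟩)
        · obtain ⟨h1, h2, h3, h4⟩ := pair_lt_ne (k := k) (i := i) hik
          rw [hsame _ h1 h2, hsame _ h3 h4] at ha
          exact absurd ha (Shrikhande.loopless.irrefl _)
        · by_cases h1 : j = pc1 m n k
          · subst h1
            exact Or.inl ⟨hnej, he _ (Ne.symm pc1_ne_pc2)⟩
          by_cases h2 : j = pc2 m n k
          · subst h2
            exact Or.inr ⟨hnej, he _ pc1_ne_pc2⟩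
          · exact absurd (hsame j h1 h2) hnej
      · rintro (⟨hnej, heq⟩ | ⟨hnej, heq⟩)
        · refine Or.inr ⟨pc1 m n k, by simp [pc1], hnej, fun j' hj' => ?_⟩
          by_cases h2 : j' = pc2 m n k
          · subst h2; exact heq
          · exact hsame j' hj' h2
        · refine Or.inr ⟨pc2 m n k, by simp [pc2], hnej, fun j' hj' => ?_⟩
          by_cases h1 : j' = pc1 m n k
          · subst h1; exact heq
          · exact hsame j' h1 hj'
    rw [hG1, shr_adj_iff]
    simp only [hG0, hne, and_iff_left hsame]
    unfold shrAdj Xor'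
    simp only [Ne, Prod.mk.injEq, not_and]
  · -- Case B : f and g differ outside the k-th pair
    push_neg at hsame
    obtain ⟨j0, h1, h2, h3⟩ := hsame
    have hflip : ¬(((f (pc1 m n k) ≠ f (pc2 m n k) ∧ g (pc1 m n k) = g (pc2 m n k)) ∨
       (g (pc1 m n k) ≠ g (pc2 m n k) ∧ f (pc1 m n k) = f (pc2 m n k))) ∧
      ∀ j, j ≠ pc1 m n k → j ≠ pc2 m n k → f j = g j) := by
      rintro ⟨-, hoff⟩
      exact h3 (hoff j0 h1 h2)
    have hsucc : (Gam m n ((k : ℕ) + 1)).Adj f g ↔ (Gam m n k).Adj f g := by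
      constructor
      · rintro (⟨i, hik, ha, he⟩ | ⟨j, hj, hnej, he⟩)
        · by_cases hik' : (i : ℕ) < (k : ℕ)
          · exact Or.inl ⟨i, hik', ha, he⟩
          · have : i = k := Fin.ext (by omega)
            subst this
            exact absurd (he j0 h1 h2) h3
        · exact Or.inr ⟨j, by omega, hnej, he⟩
      · rintro (⟨i, hik, ha, he⟩ | ⟨j, hj, hnej, he⟩)
        · exact Or.inl ⟨i, by omega, ha, he⟩
        · refine Or.inr ⟨j, ?_, hnej, he⟩
          have hja : j ≠ pc1 m n k := by
            rintro rfl
            exact h3 (he j0 h1)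
          have hjb : j ≠ pc2 m n k := by
            rintro rfl
            exact h3 (he j0 h2)
          simp only [pc1, pc2, Ne, Fin.ext_iff] at hja hjb
          omega
    rw [hsucc]
    constructor
    · intro h
      exact ⟨h.ne, Or.inl ⟨h, hflip⟩⟩
    · rintro ⟨-, ⟨h, -⟩ | ⟨h, -⟩⟩
      · exact h
      · exact absurd h hflip

end Switch
lemma gam_zero (m n : ℕ) : Gam m n 0 = HamGraph (2 * m + n) := by
  ext f g
  constructor
  · rintro (⟨i, hik, -⟩ | ⟨j, -, hne, he⟩)
    · omega
    · exact ⟨j, hne, he⟩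
  · rintro ⟨j, hne, he⟩
    exact Or.inr ⟨j, by omega, hne, he⟩

section Iso

variable (m n : ℕ)

/-- Regroup the coordinates. -/
def toD (f : Fin (2 * m + n) → Fin 4) :
    (Fin m → Fin 4 × Fin 4) × (Fin n → Fin 4) :=
  (fun i => (f (pc1 m n i), f (pc2 m n i)), fun r => f (pcr m n r))

/-- Ungroup the coordinates. -/
def frD (p : (Fin m → Fin 4 × Fin 4) × (Fin n → Fin 4)) :
    Fin (2 * m + n) → Fin 4 :=
  fun j =>
    if h : (j : ℕ) < 2 * m then
      if (j : ℕ) % 2 = 0 then (p.1 ⟨(j : ℕ) / 2, by omega⟩).1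
      else (p.1 ⟨(j : ℕ) / 2, by omega⟩).2
    else p.2 ⟨(j : ℕ) - 2 * m, by omega⟩

variable {m n}

lemma pc1_val (i : Fin m) : ((pc1 m n i) : ℕ) = 2 * (i : ℕ) := rfl
lemma pc2_val (i : Fin m) : ((pc2 m n i) : ℕ) = 2 * (i : ℕ) + 1 := rfl
lemma pcr_val (r : Fin n) : ((pcr m n r) : ℕ) = 2 * m + (r : ℕ) := rfl

lemma frD_pc1 (p) (i : Fin m) : frD m n p (pc1 m n i) = (p.1 i).1 := by
  have hi : (i : ℕ) < m := i.2
  simp only [frD, pc1_val]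
  erw [dif_pos (by omega : 2 * (i : ℕ) < 2 * m), if_pos (by omega : 2 * (i : ℕ) % 2 = 0)]
  exact congrArg (fun z => (p.1 z).1) (Fin.ext (by show 2 * (i : ℕ) / 2 = (i : ℕ); omega))

lemma frD_pc2 (p) (i : Fin m) : frD m n p (pc2 m n i) = (p.1 i).2 := by
  have hi : (i : ℕ) < m := i.2
  simp only [frD, pc2_val]
  erw [dif_pos (by omega : 2 * (i : ℕ) + 1 < 2 * m)]
  erw [if_neg (by omega : ¬(2 * (i : ℕ) + 1) % 2 = 0)]
  exact congrArg (fun z => (p.1 z).2)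
    (Fin.ext (by show (2 * (i : ℕ) + 1) / 2 = (i : ℕ); omega))

lemma frD_pcr (p) (r : Fin n) : frD m n p (pcr m n r) = p.2 r := by
  simp only [frD, pcr_val]
  erw [dif_neg (by omega : ¬2 * m + (r : ℕ) < 2 * m)]
  exact congrArg p.2 (Fin.ext (by show 2 * m + (r : ℕ) - 2 * m = (r : ℕ); omega))

lemma classify (j : Fin (2 * m + n)) :
    (∃ i : Fin m, j = pc1 m n i) ∨ (∃ i : Fin m, j = pc2 m n i) ∨
      (∃ r : Fin n, j = pcr m n r) := by
  have hj : (j : ℕ) < 2 * m + n := j.2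
  by_cases h : (j : ℕ) < 2 * m
  · by_cases h2 : (j : ℕ) % 2 = 0
    · exact Or.inl ⟨⟨(j : ℕ) / 2, by omega⟩, Fin.ext (by show (j : ℕ) = 2 * ((j : ℕ) / 2); omega)⟩
    · exact Or.inr (Or.inl ⟨⟨(j : ℕ) / 2, by omega⟩,
        Fin.ext (by show (j : ℕ) = 2 * ((j : ℕ) / 2) + 1; omega)⟩)
  · exact Or.inr (Or.inr ⟨⟨(j : ℕ) - 2 * m, by omega⟩,
      Fin.ext (by show (j : ℕ) = 2 * m + ((j : ℕ) - 2 * m); omega)⟩)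

/-- The regrouping equivalence. -/
def eD : (Fin (2 * m + n) → Fin 4) ≃ (Fin m → Fin 4 × Fin 4) × (Fin n → Fin 4) where
  toFun := toD m n
  invFun := frD m n
  left_inv := by
    intro f
    funext j
    rcases classify j with ⟨i, rfl⟩ | ⟨i, rfl⟩ | ⟨r, rfl⟩
    · exact frD_pc1 (toD m n f) i
    · exact frD_pc2 (toD m n f) i
    · exact frD_pcr (toD m n f) r
  right_inv := by
    intro p
    refine Prod.ext ?_ ?_
    · funext i
      show (frD m n p (pc1 m n i), frD m n p (pc2 m n i)) = p.1 i
      rw [frD_pc1, frD_pc2]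
    · funext r
      exact frD_pcr p r

lemma offpair_iff (f g : Fin (2 * m + n) → Fin 4) (i : Fin m) :
    (∀ j, j ≠ pc1 m n i → j ≠ pc2 m n i → f j = g j) ↔
      ((∀ i', i' ≠ i → f (pc1 m n i') = g (pc1 m n i') ∧ f (pc2 m n i') = g (pc2 m n i')) ∧
        ∀ r, f (pcr m n r) = g (pcr m n r)) := by
  constructor
  · intro h
    refine ⟨fun i' hi' => ?_, fun r => ?_⟩
    · have hv : (i' : ℕ) ≠ (i : ℕ) := fun hv => hi' (Fin.ext hv)
      constructor
      · exact h _ (by simp only [pc1, Ne, Fin.ext_iff]; omega)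
          (by simp only [pc1, pc2, Ne, Fin.ext_iff]; omega)
      · exact h _ (by simp only [pc1, pc2, Ne, Fin.ext_iff]; omega)
          (by simp only [pc2, Ne, Fin.ext_iff]; omega)
    · have hr : (r : ℕ) < n := r.2
      have hi : (i : ℕ) < m := i.2
      exact h _ (by simp only [pcr, pc1, Ne, Fin.ext_iff]; omega)
        (by simp only [pcr, pc2, Ne, Fin.ext_iff]; omega)
  · rintro ⟨hp, hr⟩ j h1 h2
    rcases classify j with ⟨i', rfl⟩ | ⟨i', rfl⟩ | ⟨r, rfl⟩
    · exact (hp i' (fun hh => h1 (by rw [hh]))).1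
    · exact (hp i' (fun hh => h2 (by rw [hh]))).2
    · exact hr r

lemma isoGam : Nonempty (Gam m n m ≃g DoobGraph m n) := by
  refine ⟨⟨eD, ?_⟩⟩
  intro f g
  show (DoobGraph m n).Adj (toD m n f) (toD m n g) ↔ (Gam m n m).Adj f g
  constructor
  · rintro (⟨i, ha, hp, h2⟩ | ⟨r, hne, hr', h1⟩)
    · refine Or.inl ⟨i, i.2, ha, (offpair_iff f g i).mpr ⟨fun i' hi' => ?_, fun r => ?_⟩⟩
      · exact Prod.mk.injEq .. ▸ Prod.ext_iff.mp (hp i' hi')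
      · exact congrFun h2 r
    · refine Or.inr ⟨pcr m n r, by simp [pcr], hne, ?_⟩
      intro j' hj'
      rcases classify j' with ⟨i', rfl⟩ | ⟨i', rfl⟩ | ⟨r', rfl⟩
      · exact congrArg Prod.fst (congrFun h1 i')
      · exact congrArg Prod.snd (congrFun h1 i')
      · refine hr' r' fun hh => hj' (by rw [hh])
  · rintro (⟨i, -, ha, he⟩ | ⟨j, hj, hne, he⟩)
    · obtain ⟨hp, hr⟩ := (offpair_iff f g i).mp he
      refine Or.inl ⟨i, ha, fun i' hi' => ?_, funext hr⟩
      have := hp i' hi'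
      show (f (pc1 m n i'), f (pc2 m n i')) = (g (pc1 m n i'), g (pc2 m n i'))
      rw [this.1, this.2]
    · have hjv : (j : ℕ) < 2 * m + n := j.2
      have hjr : j = pcr m n ⟨(j : ℕ) - 2 * m, by omega⟩ := Fin.ext (by
        show (j : ℕ) = 2 * m + ((j : ℕ) - 2 * m); omega)
      refine Or.inr ⟨⟨(j : ℕ) - 2 * m, by omega⟩, ?_, ?_, ?_⟩
      · show f (pcr m n ⟨(j : ℕ) - 2 * m, by omega⟩) ≠ g (pcr m n ⟨(j : ℕ) - 2 * m, by omega⟩)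
        rw [← hjr]; exact hne
      · intro r' hr'
        refine he _ fun hh => hr' ?_
        rw [hjr] at hh
        have hv := congrArg Fin.val hh
        rw [pcr_val, pcr_val] at hv
        refine Fin.ext ?_
        show (r' : ℕ) = (j : ℕ) - 2 * m
        omega
      · funext i'
        have h1 : f (pc1 m n i') = g (pc1 m n i') := by
          refine he _ fun hh => ?_
          have hv := congrArg Fin.val hh
          have hi' : (i' : ℕ) < m := i'.2
          rw [pc1_val] at hv
          omega
        have h2 : f (pc2 m n i') = g (pc2 m n i') := by
          refine he _ fun hh => ?_
          have hv := congrArg Fin.val hh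
          have hi' : (i' : ℕ) < m := i'.2
          rw [pc2_val] at hv
          omega
        show (f (pc1 m n i'), f (pc2 m n i')) = (g (pc1 m n i'), g (pc2 m n i'))
        rw [h1, h2]

end Iso

/-- the Doob graph `D(m,n)` is obtained from the Hamming graph
`H(2m+n,4)` by applying Godsil–McKay switching `m` times. -/
theorem doob_from_hamming_by_switching (m n : ℕ) (hm : 1 ≤ m) :
    ∃ Γ : Fin (m + 1) → SimpleGraph (Fin (2 * m + n) → Fin 4),
      Γ 0 = HamGraph (2 * m + n)
      ∧ Nonempty (Γ (Fin.last m) ≃g DoobGraph m n)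
      ∧ ∀ k : Fin m, ∃ (t : ℕ) (C : Fin t → Finset (Fin (2 * m + n) → Fin 4))
          (D : Finset (Fin (2 * m + n) → Fin 4)),
            IsGMPartition (Γ k.castSucc) C D
            ∧ Γ k.succ = GMswitch (Γ k.castSucc) C D := by
  refine ⟨fun k => Gam m n (k : ℕ), ?_, ?_, ?_⟩
  · show Gam m n ((0 : Fin (m + 1)) : ℕ) = _
    rw [Fin.val_zero]
    exact gam_zero m n
  · show Nonempty (Gam m n ((Fin.last m : Fin (m + 1)) : ℕ) ≃g DoobGraph m n)
    rw [Fin.val_last]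
    exact isoGam
  · intro k
    refine ⟨Fintype.card (NT m n k), cells m n k, Dset m n k, ?_, ?_⟩
    · show IsGMPartition (Gam m n (k : ℕ)) _ _
      exact isGM
    · show Gam m n ((k : ℕ) + 1) = GMswitch (Gam m n (k : ℕ)) (cells m n k) (Dset m n k)
      exact gam_succ_eq
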